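/- Let G be a minimal counterexample to the statement that all planar graphs have 3-weak-dynamic number at most 6, chosen with the fewest edges and, among those, the fewest vertices. Then G does not contain a triangle with vertices v_1, v_2, v_3 such that d(v_1) = d(v_2) = 3, d(v_3) ≥ 5, and each of v_1 and v_2 has exactly one neighbor of degree at least 4. -/

import Mathlib

open SimpleGraph
open Set Function

/-- `H` is a minor of `G`: there are nonempty, connected, pairwise disjoint branch sets
in `G`, with an edge of `G` between the branch sets of any two adjacent vertices of `H`. -/
def HasMinor {V W : Type} (G : SimpleGraph V) (H : SimpleGraph W) : Prop :=
  ∃ f : W → Set V,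
    (∀ w, (f w).Nonempty) ∧
    (∀ w, (G.induce (f w)).Connected) ∧
    (∀ w w', w ≠ w' → Disjoint (f w) (f w')) ∧
    (∀ w w', H.Adj w w' → ∃ a ∈ f w, ∃ b ∈ f w', G.Adj a b)

/-- A graph is planar iff it has no `K₅` minor and no `K_{3,3}` minor (Wagner's theorem). -/
def IsPlanar {V : Type} (G : SimpleGraph V) : Prop :=
  ¬ HasMinor G (⊤ : SimpleGraph (Fin 5)) ∧
  ¬ HasMinor G (completeBipartiteGraph (Fin 3) (Fin 3))

/-- The degree of a vertex `v`, the number of its neighbors. -/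
noncomputable def deg {V : Type} (G : SimpleGraph V) (v : V) : ℕ :=
  (G.neighborSet v).ncard

/-- `G` admits a `k`-weak-dynamic coloring with `n` colors: a (not necessarily proper)
coloring such that every vertex `v` sees at least `min k (d v)` colors on its neighborhood. -/
def WDColorable {V : Type} (G : SimpleGraph V) (k n : ℕ) : Prop :=
  ∃ c : V → Fin n, ∀ v, min k (deg G v) ≤ (c '' G.neighborSet v).ncard




lemma exists_not_mem_of_ncard_le (S : Set (Fin 6)) (h : S.ncard ≤ 5) : ∃ t, t ∉ S := by
  by_contra h'
  push_neg at h'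
  have : S = Set.univ := Set.eq_univ_of_forall h'
  rw [this, Set.ncard_univ] at h
  simp at h

lemma subset_pair {α : Type} [Nonempty α] (S : Set α) (hfin : S.Finite) (h : S.ncard ≤ 2) :
    ∃ p q, S ⊆ {p, q} := by
  rcases S.eq_empty_or_nonempty with rfl | ⟨p, hp⟩
  · exact ⟨Classical.arbitrary α, Classical.arbitrary α, by simp⟩
  rcases (S \ {p}).eq_empty_or_nonempty with he | ⟨q, hq⟩
  · exact ⟨p, p, by intro z hz; simp [Set.eq_of_mem_singleton (Set.diff_eq_empty.mp he hz)]⟩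
  refine ⟨p, q, fun z hz => ?_⟩
  by_contra hzpq
  simp only [Set.mem_insert_iff, Set.mem_singleton_iff, not_or] at hzpq
  have h1 : (S \ {p}).ncard = S.ncard - 1 := Set.ncard_diff_singleton_of_mem hp
  have hsub : ({q, z} : Set α) ⊆ S \ {p} := by
    rintro w (rfl | rfl)
    · exact hq
    · exact ⟨hz, hzpq.1⟩
  have hqz : q ≠ z := fun hqz => hzpq.2 (hqz ▸ rfl)
  have := Set.ncard_le_ncard hsub hfin.diff
  rw [Set.ncard_pair hqz] at this
  omega

lemma eq_triple {α : Type} (S : Set α) (hfin : S.Finite) (h3 : S.ncard = 3)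
    (a b : α) (ha : a ∈ S) (hb : b ∈ S) (hab : a ≠ b) :
    ∃ x, x ∈ S ∧ x ≠ a ∧ x ≠ b ∧ S = {a, b, x} := by
  have h1 : (S \ {a}).ncard = 2 := by
    rw [Set.ncard_diff_singleton_of_mem ha, h3]
  have hb' : b ∈ S \ {a} := ⟨hb, by simp [Ne.symm hab]⟩
  have h2 : ((S \ {a}) \ {b}).ncard = 1 := by
    rw [Set.ncard_diff_singleton_of_mem hb', h1]
  obtain ⟨x, hx⟩ : ((S \ {a}) \ {b}).Nonempty := by
    rw [← Set.ncard_pos hfin.diff.diff]; omega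
  obtain ⟨⟨hxS, hxa⟩, hxb⟩ := hx
  simp only [Set.mem_singleton_iff] at hxa hxb
  refine ⟨x, hxS, hxa, hxb, ?_⟩
  have hsub : ({a, b, x} : Set α) ⊆ S := by
    intro z hz
    rcases hz with rfl | rfl | rfl
    exacts [ha, hb, hxS]
  have hc3 : ({a, b, x} : Set α).ncard = 3 := by
    have hfin2 : ({b, x} : Set α).Finite := (Set.finite_singleton x).insert b
    rw [Set.ncard_insert_of_notMem (by simp [hab, Ne.symm hxa]) hfin2,
      Set.ncard_pair (Ne.symm hxb)]
  exact (Set.eq_of_subset_of_ncard_le hsub (by omega) hfin).symm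

lemma ncard_triple {β : Type} (a b c : β) (hab : a ≠ b) (hac : a ≠ c) (hbc : b ≠ c) :
    ({a, b, c} : Set β).ncard = 3 := by
  rw [Set.ncard_insert_of_notMem (by simp [hab, hac]) (Set.toFinite _), Set.ncard_pair hbc]

lemma hasMinor_mono {V W : Type} {H G : SimpleGraph V} (hle : H ≤ G) {K : SimpleGraph W}
    (h : HasMinor H K) : HasMinor G K := by
  obtain ⟨f, h1, h2, h3, h4⟩ := h
  refine ⟨f, h1, fun w => (h2 w).mono (fun a b hab => hle hab), h3, fun w w' hww => ?_⟩
  obtain ⟨a, ha, b, hb, hab⟩ := h4 w w' hww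
  exact ⟨a, ha, b, hb, hle hab⟩

/-- key invariant-preserving single-vertex-recolor lemma -/
lemma step {V : Type} [Fintype V] [DecidableEq V] (H : SimpleGraph V) (c : V → Fin 6)
    (hQ : ∀ v, min 3 (deg H v) ≤ (c '' H.neighborSet v).ncard)
    (w : V) (t : Fin 6)
    (ht : ∀ v, w ∈ H.neighborSet v → (c '' (H.neighborSet v \ {w})).ncard ≤ 2 →
      t ∉ c '' (H.neighborSet v \ {w})) :
    ∀ v, min 3 (deg H v) ≤ (update c w t '' H.neighborSet v).ncard := by
  intro v
  by_cases hw : w ∈ H.neighborSet v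
  · have hins : insert w (H.neighborSet v \ {w}) = H.neighborSet v := by
      rw [Set.insert_diff_singleton, Set.insert_eq_self.mpr hw]
    have himg : update c w t '' H.neighborSet v
        = insert t (c '' (H.neighborSet v \ {w})) := by
      conv_lhs => rw [← hins]
      rw [Set.image_insert_eq, Function.update_self]
      congr 1
      apply Set.image_congr
      intro z hz
      exact Function.update_of_ne hz.2 t c
    have hsub : c '' H.neighborSet v ⊆ insert (c w) (c '' (H.neighborSet v \ {w})) := by
      rintro _ ⟨z, hz, rfl⟩
      by_cases hzw : z = w
      · subst hzw; exact Set.mem_insert _ _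
      · exact Set.mem_insert_of_mem _ ⟨z, ⟨hz, hzw⟩, rfl⟩
    have h1 : min 3 (deg H v) ≤ (c '' (H.neighborSet v \ {w})).ncard + 1 :=
      le_trans (hQ v) (le_trans (Set.ncard_le_ncard hsub (Set.toFinite _))
        (Set.ncard_insert_le _ _))
    rw [himg]
    by_cases hBc : (c '' (H.neighborSet v \ {w})).ncard ≤ 2
    · rw [Set.ncard_insert_of_notMem (ht v hw hBc) (Set.toFinite _)]
      omega
    · have h3 : 3 ≤ (c '' (H.neighborSet v \ {w})).ncard := by omega
      exact le_trans (le_trans (min_le_left _ _) h3)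
        (Set.ncard_le_ncard (Set.subset_insert _ _) (Set.toFinite _))
  · have : update c w t '' H.neighborSet v = c '' H.neighborSet v := by
      apply Set.image_congr
      intro z hz
      have hzw : z ≠ w := by rintro rfl; exact hw hz
      exact Function.update_of_ne hzw t c
    rw [this]; exact hQ v

/-- recolor a vertex of `H`-degree ≤ 2, avoiding a set of ≤ 1 colors -/
lemma recolor_small {V : Type} [Fintype V] [DecidableEq V] (H : SimpleGraph V) (c : V → Fin 6)
    (hQ : ∀ v, min 3 (deg H v) ≤ (c '' H.neighborSet v).ncard)
    (w : V) (hdeg : (H.neighborSet w).ncard ≤ 2) (avoid : Set (Fin 6)) (hav : avoid.ncard ≤ 1) :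
    ∃ t, t ∉ avoid ∧ ∀ v, min 3 (deg H v) ≤ (update c w t '' H.neighborSet v).ncard := by
  classical
  have : Nonempty V := ⟨w⟩
  obtain ⟨p, q, hpq⟩ := subset_pair (H.neighborSet w) (Set.toFinite _) hdeg
  set Bp : Set (Fin 6) := if (c '' (H.neighborSet p \ {w})).ncard ≤ 2
    then c '' (H.neighborSet p \ {w}) else ∅ with hBp
  set Bq : Set (Fin 6) := if (c '' (H.neighborSet q \ {w})).ncard ≤ 2
    then c '' (H.neighborSet q \ {w}) else ∅ with hBq
  have hBpc : Bp.ncard ≤ 2 := by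
    rw [hBp]; split
    · assumption
    · simp
  have hBqc : Bq.ncard ≤ 2 := by
    rw [hBq]; split
    · assumption
    · simp
  have hFc : (avoid ∪ (Bp ∪ Bq)).ncard ≤ 5 := by
    calc (avoid ∪ (Bp ∪ Bq)).ncard ≤ avoid.ncard + (Bp ∪ Bq).ncard := Set.ncard_union_le _ _
    _ ≤ avoid.ncard + (Bp.ncard + Bq.ncard) := by
        exact Nat.add_le_add_left (Set.ncard_union_le _ _) _
    _ ≤ 5 := by omega
  obtain ⟨t, htF⟩ := exists_not_mem_of_ncard_le _ hFc
  refine ⟨t, fun h => htF (Set.mem_union_left _ h), ?_⟩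
  apply step H c hQ w t
  intro v hv hsmall
  have hvw : v ∈ H.neighborSet w := by
    rw [SimpleGraph.mem_neighborSet] at hv ⊢
    exact hv.symm
  rcases hpq hvw with rfl | rfl
  · intro hmem
    apply htF
    apply Set.mem_union_right
    apply Set.mem_union_left
    rw [hBp, if_pos hsmall]
    exact hmem
  · intro hmem
    apply htF
    apply Set.mem_union_right
    apply Set.mem_union_right
    rw [hBq, if_pos hsmall]
    exact hmem

/-- recolor an isolated vertex of `H`, avoiding ≤ 5 colors -/
lemma recolor_free {V : Type} [Fintype V] [DecidableEq V] (H : SimpleGraph V) (c : V → Fin 6)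
    (hQ : ∀ v, min 3 (deg H v) ≤ (c '' H.neighborSet v).ncard)
    (w : V) (hdeg : H.neighborSet w = ∅) (avoid : Set (Fin 6)) (hav : avoid.ncard ≤ 5) :
    ∃ t, t ∉ avoid ∧ ∀ v, min 3 (deg H v) ≤ (update c w t '' H.neighborSet v).ncard := by
  obtain ⟨t, htF⟩ := exists_not_mem_of_ncard_le _ hav
  refine ⟨t, htF, step H c hQ w t fun v hv _ => ?_⟩
  exfalso
  have : v ∈ H.neighborSet w := by
    rw [SimpleGraph.mem_neighborSet] at hv ⊢
    exact hv.symm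
  rw [hdeg] at this
  exact this

/-- A minimal counterexample contains no triangle v₁v₂v₃ with d(v₁) = d(v₂) = 3, d(v₃) ≥ 5, in which each of v₁ and v₂ has exactly one neighbor of degree at least 4. -/
theorem minCounterexample_no_triangle_deg5_top {V : Type} [Fintype V] (G : SimpleGraph V)
    (hplanar : IsPlanar G) (hcex : ¬ WDColorable G 3 6)
    (hminEdges : ∀ (W : Type) [Fintype W] (H : SimpleGraph W),
      IsPlanar H → H.edgeSet.ncard < G.edgeSet.ncard → WDColorable H 3 6)
    (hminVerts : ∀ (W : Type) [Fintype W] (H : SimpleGraph W),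
      IsPlanar H → ¬ WDColorable H 3 6 → H.edgeSet.ncard = G.edgeSet.ncard →
      Nat.card V ≤ Nat.card W) :
    ¬ ∃ v₁ v₂ v₃ : V,
      G.Adj v₁ v₂ ∧ G.Adj v₂ v₃ ∧ G.Adj v₁ v₃ ∧
      deg G v₁ = 3 ∧ deg G v₂ = 3 ∧ 5 ≤ deg G v₃ ∧
      {u : V | G.Adj v₁ u ∧ 4 ≤ deg G u}.ncard = 1 ∧
      {u : V | G.Adj v₂ u ∧ 4 ≤ deg G u}.ncard = 1 := by
  classical
  rintro ⟨v₁, v₂, v₃, h₁₂, h₂₃, h₁₃, hd₁, hd₂, hd₃, hA₁, hA₂⟩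
  have hdeg_def : ∀ (K : SimpleGraph V) (v : V), deg K v = (K.neighborSet v).ncard :=
    fun _ _ => rfl
  have hne₁₂ : v₁ ≠ v₂ := h₁₂.ne
  have hne₁₃ : v₁ ≠ v₃ := h₁₃.ne
  have hne₂₃ : v₂ ≠ v₃ := h₂₃.ne
  -- extract x, the third neighbor of v₁
  obtain ⟨x, hxN, hxv₂, hxv₃, hN₁⟩ :=
    eq_triple (G.neighborSet v₁) (Set.toFinite _) (by rw [← hdeg_def]; exact hd₁)
      v₂ v₃ (by simpa using h₁₂) (by simpa using h₁₃) hne₂₃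
  have hadj₁x : G.Adj v₁ x := by simpa using hxN
  have hxv₁ : x ≠ v₁ := hadj₁x.ne'
  -- extract y, the third neighbor of v₂
  obtain ⟨y, hyN, hyv₁, hyv₃, hN₂⟩ :=
    eq_triple (G.neighborSet v₂) (Set.toFinite _) (by rw [← hdeg_def]; exact hd₂)
      v₁ v₃ (by simpa using h₁₂.symm) (by simpa using h₂₃) hne₁₃
  have hadj₂y : G.Adj v₂ y := by simpa using hyN
  have hyv₂ : y ≠ v₂ := hadj₂y.ne'
  -- x and y have degree ≤ 3
  have hdx : deg G x ≤ 3 := by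
    by_contra hcon
    push_neg at hcon
    have hsub : ({v₃, x} : Set V) ⊆ {u : V | G.Adj v₁ u ∧ 4 ≤ deg G u} := by
      rintro w (rfl | rfl)
      · exact ⟨h₁₃, by omega⟩
      · exact ⟨hadj₁x, by omega⟩
    have := Set.ncard_le_ncard hsub (Set.toFinite _)
    rw [Set.ncard_pair (Ne.symm hxv₃), hA₁] at this
    omega
  have hdy : deg G y ≤ 3 := by
    by_contra hcon
    push_neg at hcon
    have hsub : ({v₃, y} : Set V) ⊆ {u : V | G.Adj v₂ u ∧ 4 ≤ deg G u} := by
      rintro w (rfl | rfl)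
      · exact ⟨h₂₃, by omega⟩
      · exact ⟨hadj₂y, by omega⟩
    have := Set.ncard_le_ncard hsub (Set.toFinite _)
    rw [Set.ncard_pair (Ne.symm hyv₃), hA₂] at this
    omega
  -- the reduced graph H : delete all edges at v₁ and v₂
  set H : SimpleGraph V :=
    { Adj := fun a b => G.Adj a b ∧ a ≠ v₁ ∧ a ≠ v₂ ∧ b ≠ v₁ ∧ b ≠ v₂
      symm := by
        constructor
        rintro a b ⟨h1, h2, h3, h4, h5⟩
        exact ⟨h1.symm, h4, h5, h2, h3⟩
      loopless := ⟨fun a h => G.loopless.irrefl a h.1⟩ } with hHdef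
  have hHadj : ∀ a b : V, H.Adj a b ↔ G.Adj a b ∧ a ≠ v₁ ∧ a ≠ v₂ ∧ b ≠ v₁ ∧ b ≠ v₂ :=
    fun _ _ => Iff.rfl
  have hHle : H ≤ G := fun a b h => h.1
  have hHN : ∀ v : V, v ≠ v₁ → v ≠ v₂ → H.neighborSet v = G.neighborSet v \ {v₁, v₂} := by
    intro v hv1 hv2
    ext u
    simp only [SimpleGraph.mem_neighborSet, Set.mem_diff, Set.mem_insert_iff,
      Set.mem_singleton_iff, hHadj, not_or]
    tauto
  have hHN₁ : H.neighborSet v₁ = ∅ :=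
    Set.eq_empty_iff_forall_notMem.mpr (fun u hu => hu.2.1 rfl)
  have hHN₂ : H.neighborSet v₂ = ∅ :=
    Set.eq_empty_iff_forall_notMem.mpr (fun u hu => hu.2.2.1 rfl)
  have hHplanar : IsPlanar H :=
    ⟨fun h => hplanar.1 (hasMinor_mono hHle h), fun h => hplanar.2 (hasMinor_mono hHle h)⟩
  have hEdge : H.edgeSet.ncard < G.edgeSet.ncard := by
    apply Set.ncard_lt_ncard _ (Set.toFinite _)
    constructor
    · exact SimpleGraph.edgeSet_mono hHle
    · intro hsub
      have h1 : s(v₁, v₂) ∈ G.edgeSet := h₁₂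
      exact (hsub h1).2.1 rfl
  obtain ⟨c₀, hQ₀⟩ : ∃ c : V → Fin 6,
      ∀ v, min 3 (deg H v) ≤ (c '' H.neighborSet v).ncard :=
    hminEdges V H hHplanar hEdge
  -- facts about v₃'s H-degree
  have hW3 : 3 ≤ deg H v₃ := by
    rw [hdeg_def, hHN v₃ (Ne.symm hne₁₃) (Ne.symm hne₂₃)]
    have hsub : G.neighborSet v₃ ⊆ (G.neighborSet v₃ \ {v₁, v₂}) ∪ {v₁, v₂} := by
      intro z hz
      by_cases hz12 : z = v₁ ∨ z = v₂
      · exact Set.mem_union_right _ hz12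
      · exact Set.mem_union_left _ ⟨hz, hz12⟩
    have h1 := Set.ncard_le_ncard hsub (Set.toFinite _)
    have h2 := Set.ncard_union_le (G.neighborSet v₃ \ {v₁, v₂}) ({v₁, v₂} : Set V)
    rw [Set.ncard_pair hne₁₂] at h2
    have h3 : 5 ≤ (G.neighborSet v₃).ncard := by rw [← hdeg_def]; exact hd₃
    omega
  -- helper: recoloring v₁ or v₂ does not change colors on any H-neighborhood
  have hupd12 : ∀ (f : V → Fin 6) (col : Fin 6) (z : V), (z = v₁ ∨ z = v₂) →
      ∀ w : V, Function.update f z col '' H.neighborSet w = f '' H.neighborSet w := by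
    intro f col z hz w
    apply Set.image_congr
    intro p hp
    have hp' : H.Adj w p := hp
    rcases hz with rfl | rfl
    exacts [Function.update_of_ne hp'.2.2.2.1 col f, Function.update_of_ne hp'.2.2.2.2 col f]
  -- the final goal will be to contradict hcex
  apply hcex
  by_cases hxy : x = y
  · -- the case x = y
    subst hxy
    have hv₁Nx : v₁ ∈ G.neighborSet x := by simpa using hadj₁x.symm
    have hv₂Nx : v₂ ∈ G.neighborSet x := by simpa using hadj₂y.symm
    have hHNx : H.neighborSet x = G.neighborSet x \ {v₁, v₂} := hHN x hxv₁ hxv₂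
    have he1 : G.neighborSet x \ {v₁, v₂} = (G.neighborSet x \ {v₁}) \ {v₂} := by
      rw [Set.diff_diff, Set.singleton_union]
    have hv₂Nx' : v₂ ∈ G.neighborSet x \ {v₁} := ⟨hv₂Nx, by simp [Ne.symm hne₁₂]⟩
    have hcard1 : (G.neighborSet x \ {v₁}).ncard = (G.neighborSet x).ncard - 1 :=
      Set.ncard_diff_singleton_of_mem hv₁Nx
    have hcard2 : (H.neighborSet x).ncard = (G.neighborSet x).ncard - 2 := by
      rw [hHNx, he1, Set.ncard_diff_singleton_of_mem hv₂Nx', hcard1]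
      omega
    have hdHx : (H.neighborSet x).ncard ≤ 2 := by
      have := hdx
      rw [hdeg_def] at this
      omega
    -- stage 1 : recolor x
    obtain ⟨t, ht, hQ₁⟩ := recolor_small H c₀ hQ₀ x hdHx {c₀ v₃} (by simp)
    set c₁ := Function.update c₀ x t with hc₁
    have hc₁x : c₁ x = t := by rw [hc₁, Function.update_self]
    -- stage 2 : recolor v₂
    have havb : (insert (c₀ v₃) (insert (c₁ x) (c₁ '' H.neighborSet x))).ncard ≤ 5 := by
      have h1 := Set.ncard_insert_le (c₀ v₃) (insert (c₁ x) (c₁ '' H.neighborSet x))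
      have h2 := Set.ncard_insert_le (c₁ x) (c₁ '' H.neighborSet x)
      have h3 : (c₁ '' H.neighborSet x).ncard ≤ (H.neighborSet x).ncard :=
        Set.ncard_image_le (Set.toFinite _)
      omega
    obtain ⟨b, hb, hQ₂⟩ := recolor_free H c₁ hQ₁ v₂ hHN₂ _ havb
    set c₂ := Function.update c₁ v₂ b with hc₂
    have hc₂x : c₂ x = t := by rw [hc₂, Function.update_of_ne hxv₂, hc₁x]
    -- stage 3 : recolor v₁
    have hava :
        (insert b (insert (c₀ v₃) (insert (c₂ x) (c₂ '' H.neighborSet x)))).ncard ≤ 5 := by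
      have h1 := Set.ncard_insert_le b (insert (c₀ v₃) (insert (c₂ x) (c₂ '' H.neighborSet x)))
      have h2 := Set.ncard_insert_le (c₀ v₃) (insert (c₂ x) (c₂ '' H.neighborSet x))
      have h3 := Set.ncard_insert_le (c₂ x) (c₂ '' H.neighborSet x)
      have h4 : (c₂ '' H.neighborSet x).ncard ≤ (H.neighborSet x).ncard :=
        Set.ncard_image_le (Set.toFinite _)
      omega
    obtain ⟨a, ha, hQF⟩ := recolor_free H c₂ hQ₂ v₁ hHN₁ _ hava
    set cF := Function.update c₂ v₁ a with hcF
    -- values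
    have hcFv₁ : cF v₁ = a := by rw [hcF, Function.update_self]
    have hcFv₂ : cF v₂ = b := by
      rw [hcF, Function.update_of_ne (Ne.symm hne₁₂), hc₂, Function.update_self]
    have hcFv₃ : cF v₃ = c₀ v₃ := by
      rw [hcF, Function.update_of_ne (Ne.symm hne₁₃), hc₂,
        Function.update_of_ne (Ne.symm hne₂₃), hc₁,
        Function.update_of_ne (Ne.symm hxv₃)]
    have hcFx : cF x = t := by
      rw [hcF, Function.update_of_ne hxv₁, hc₂x]
    have hcFNx : cF '' H.neighborSet x = c₂ '' H.neighborSet x := by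
      rw [hcF, hupd12 c₂ a v₁ (Or.inl rfl) x]
    have hc₂Nx : c₂ '' H.neighborSet x = c₁ '' H.neighborSet x := by
      rw [hc₂, hupd12 c₁ b v₂ (Or.inr rfl) x]
    -- distinctness facts
    have htne : t ≠ c₀ v₃ := by simpa using ht
    have hbne₁ : b ≠ c₀ v₃ := fun h => hb (h ▸ Set.mem_insert _ _)
    have hbne₂ : b ≠ t := fun h => hb (by
      rw [h, ← hc₁x]
      exact Set.mem_insert_of_mem _ (Set.mem_insert _ _))
    have hbNx : b ∉ c₁ '' H.neighborSet x := fun h =>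
      hb (Set.mem_insert_of_mem _ (Set.mem_insert_of_mem _ h))
    have hane₀ : a ≠ b := fun h => ha (h ▸ Set.mem_insert _ _)
    have hane₁ : a ≠ c₀ v₃ := fun h =>
      ha (Set.mem_insert_of_mem _ (h ▸ Set.mem_insert _ _))
    have hane₂ : a ≠ t := fun h => ha (by
      rw [h, ← hc₂x]
      exact Set.mem_insert_of_mem _ (Set.mem_insert_of_mem _ (Set.mem_insert _ _)))
    have haNx : a ∉ c₂ '' H.neighborSet x := fun h =>
      ha (Set.mem_insert_of_mem _ (Set.mem_insert_of_mem _ (Set.mem_insert_of_mem _ h)))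
    -- final verification
    refine ⟨cF, fun v => ?_⟩
    by_cases hv1 : v = v₁
    · subst hv1
      rw [hN₁]
      have himg : cF '' {v₂, v₃, x} = {b, c₀ v₃, t} := by
        rw [Set.image_insert_eq, Set.image_insert_eq, Set.image_singleton, hcFv₂, hcFv₃, hcFx]
      rw [himg, ncard_triple b (c₀ v₃) t hbne₁ hbne₂ (Ne.symm htne)]
      exact min_le_left _ _
    by_cases hv2 : v = v₂
    · subst hv2
      rw [hN₂]
      have himg : cF '' {v₁, v₃, x} = {a, c₀ v₃, t} := by
        rw [Set.image_insert_eq, Set.image_insert_eq, Set.image_singleton, hcFv₁, hcFv₃, hcFx]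
      rw [himg, ncard_triple a (c₀ v₃) t hane₁ hane₂ (Ne.symm htne)]
      exact min_le_left _ _
    by_cases hv3 : v = v₃
    · subst hv3
      have h1 : 3 ≤ (cF '' H.neighborSet v).ncard := by
        have h := hQF v
        rwa [min_eq_left hW3] at h
      have hsub2 : cF '' H.neighborSet v ⊆ cF '' G.neighborSet v :=
        Set.image_mono (by
          rw [hHN v (Ne.symm hne₁₃) (Ne.symm hne₂₃)]
          exact Set.diff_subset)
      have h2 := Set.ncard_le_ncard hsub2 (Set.toFinite _)
      have h3 : min 3 (deg G v) ≤ 3 := min_le_left _ _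
      omega
    by_cases hvx : v = x
    · subst hvx
      have hNGx : G.neighborSet v = insert v₁ (insert v₂ (H.neighborSet v)) := by
        rw [hHNx, he1, Set.insert_diff_singleton, Set.insert_eq_self.mpr hv₂Nx',
          Set.insert_diff_singleton, Set.insert_eq_self.mpr hv₁Nx]
      rw [hNGx, Set.image_insert_eq, Set.image_insert_eq, hcFv₁, hcFv₂]
      have hnm₂ : b ∉ cF '' H.neighborSet v := by
        rw [hcFNx, hc₂Nx]
        exact hbNx
      have hnm₁ : a ∉ insert b (cF '' H.neighborSet v) := by
        rw [hcFNx]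
        rintro (h | h)
        exacts [hane₀ h, haNx h]
      rw [Set.ncard_insert_of_notMem hnm₁ (Set.toFinite _),
        Set.ncard_insert_of_notMem hnm₂ (Set.toFinite _)]
      have h1 := hQF v
      have h2 : deg H v ≤ 2 := by rw [hdeg_def]; exact hdHx
      rw [min_eq_right (by omega : deg H v ≤ 3)] at h1
      have h3 : 2 ≤ (G.neighborSet v).ncard := by
        have hsub : ({v₁, v₂} : Set V) ⊆ G.neighborSet v := by
          rintro w (rfl | rfl)
          exacts [hv₁Nx, hv₂Nx]
        have := Set.ncard_le_ncard hsub (Set.toFinite _)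
        rwa [Set.ncard_pair hne₁₂] at this
      have h4 : deg H v = deg G v - 2 := by rw [hdeg_def, hdeg_def]; exact hcard2
      have h5 : min 3 (deg G v) ≤ deg G v := min_le_right _ _
      have h6 : deg G v = (G.neighborSet v).ncard := hdeg_def G v
      omega
    -- the generic vertex
    have hNv : H.neighborSet v = G.neighborSet v := by
      rw [hHN v hv1 hv2]
      ext z
      simp only [Set.mem_diff, Set.mem_insert_iff, Set.mem_singleton_iff, not_or]
      constructor
      · exact fun h => h.1
      · intro hz
        refine ⟨hz, ?_, ?_⟩
        · intro hzv1
          have hmem : v ∈ G.neighborSet v₁ := by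
            have hadj : G.Adj v v₁ := hzv1 ▸ (hz : G.Adj v z)
            simpa using hadj.symm
          rw [hN₁] at hmem
          rcases hmem with h | h | h
          exacts [hv2 h, hv3 h, hvx h]
        · intro hzv2
          have hmem : v ∈ G.neighborSet v₂ := by
            have hadj : G.Adj v v₂ := hzv2 ▸ (hz : G.Adj v z)
            simpa using hadj.symm
          rw [hN₂] at hmem
          rcases hmem with h | h | h
          exacts [hv1 h, hv3 h, hvx h]
    have hdeq : deg H v = deg G v := by rw [hdeg_def, hdeg_def, hNv]
    have h := hQF v
    rw [hNv, hdeq] at h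
    exact h
  · -- the case x ≠ y
    have hyNv₁ : y ∉ G.neighborSet v₁ := by
      rw [hN₁]
      simp only [Set.mem_insert_iff, Set.mem_singleton_iff, not_or]
      exact ⟨hyv₂, hyv₃, fun h => hxy h.symm⟩
    have hxNv₂ : x ∉ G.neighborSet v₂ := by
      rw [hN₂]
      simp only [Set.mem_insert_iff, Set.mem_singleton_iff, not_or]
      exact ⟨hxv₁, hxv₃, hxy⟩
    have hv₁Nx : v₁ ∈ G.neighborSet x := by simpa using hadj₁x.symm
    have hv₂Ny : v₂ ∈ G.neighborSet y := by simpa using hadj₂y.symm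
    have hv₂Nx : v₂ ∉ G.neighborSet x := by
      simp only [SimpleGraph.mem_neighborSet]
      intro hadj
      exact hxNv₂ (by simpa using hadj.symm)
    have hv₁Ny : v₁ ∉ G.neighborSet y := by
      simp only [SimpleGraph.mem_neighborSet]
      intro hadj
      exact hyNv₁ (by simpa using hadj.symm)
    have hHNx : H.neighborSet x = G.neighborSet x \ {v₁} := by
      rw [hHN x hxv₁ hxv₂]
      ext z
      simp only [Set.mem_diff, Set.mem_insert_iff, Set.mem_singleton_iff, not_or]
      constructor
      · rintro ⟨hz, hz1, _⟩; exact ⟨hz, hz1⟩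
      · rintro ⟨hz, hz1⟩
        refine ⟨hz, hz1, fun hzv2 => hv₂Nx (hzv2 ▸ hz)⟩
    have hHNy : H.neighborSet y = G.neighborSet y \ {v₂} := by
      rw [hHN y hyv₁ hyv₂]
      ext z
      simp only [Set.mem_diff, Set.mem_insert_iff, Set.mem_singleton_iff, not_or]
      constructor
      · rintro ⟨hz, _, hz2⟩; exact ⟨hz, hz2⟩
      · rintro ⟨hz, hz2⟩
        refine ⟨hz, fun hzv1 => hv₁Ny (hzv1 ▸ hz), hz2⟩
    have hdHx : (H.neighborSet x).ncard ≤ 2 := by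
      rw [hHNx, Set.ncard_diff_singleton_of_mem hv₁Nx]
      have := hdx
      rw [hdeg_def] at this
      omega
    have hdHy : (H.neighborSet y).ncard ≤ 2 := by
      rw [hHNy, Set.ncard_diff_singleton_of_mem hv₂Ny]
      have := hdy
      rw [hdeg_def] at this
      omega
    -- stage 1 : recolor x
    obtain ⟨t, ht, hQ₁⟩ := recolor_small H c₀ hQ₀ x hdHx {c₀ v₃} (by simp)
    set c₁ := Function.update c₀ x t with hc₁
    -- stage 2 : recolor y
    obtain ⟨u, hu, hQ₂⟩ := recolor_small H c₁ hQ₁ y hdHy {c₀ v₃} (by simp)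
    set c₂ := Function.update c₁ y u with hc₂
    have hc₂x : c₂ x = t := by
      rw [hc₂, Function.update_of_ne hxy, hc₁, Function.update_self]
    -- stage 3 : recolor v₂
    have havb : (insert (c₀ v₃) (insert (c₂ x) (c₂ '' H.neighborSet y))).ncard ≤ 5 := by
      have h1 := Set.ncard_insert_le (c₀ v₃) (insert (c₂ x) (c₂ '' H.neighborSet y))
      have h2 := Set.ncard_insert_le (c₂ x) (c₂ '' H.neighborSet y)
      have h3 : (c₂ '' H.neighborSet y).ncard ≤ (H.neighborSet y).ncard :=
        Set.ncard_image_le (Set.toFinite _)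
      omega
    obtain ⟨b, hb, hQ₃⟩ := recolor_free H c₂ hQ₂ v₂ hHN₂ _ havb
    set c₃ := Function.update c₂ v₂ b with hc₃
    have hc₃y : c₃ y = u := by
      rw [hc₃, Function.update_of_ne hyv₂, hc₂, Function.update_self]
    have hc₃x : c₃ x = t := by
      rw [hc₃, Function.update_of_ne hxv₂, hc₂x]
    -- stage 4 : recolor v₁
    have hava : (insert (c₀ v₃) (insert (c₃ y) (c₃ '' H.neighborSet x))).ncard ≤ 5 := by
      have h1 := Set.ncard_insert_le (c₀ v₃) (insert (c₃ y) (c₃ '' H.neighborSet x))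
      have h2 := Set.ncard_insert_le (c₃ y) (c₃ '' H.neighborSet x)
      have h3 : (c₃ '' H.neighborSet x).ncard ≤ (H.neighborSet x).ncard :=
        Set.ncard_image_le (Set.toFinite _)
      omega
    obtain ⟨a, ha, hQF⟩ := recolor_free H c₃ hQ₃ v₁ hHN₁ _ hava
    set cF := Function.update c₃ v₁ a with hcF
    -- values of the final coloring
    have hcFv₁ : cF v₁ = a := by rw [hcF, Function.update_self]
    have hcFv₂ : cF v₂ = b := by
      rw [hcF, Function.update_of_ne (Ne.symm hne₁₂), hc₃, Function.update_self]
    have hcFv₃ : cF v₃ = c₀ v₃ := by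
      rw [hcF, Function.update_of_ne (Ne.symm hne₁₃), hc₃,
        Function.update_of_ne (Ne.symm hne₂₃), hc₂,
        Function.update_of_ne (Ne.symm hyv₃), hc₁,
        Function.update_of_ne (Ne.symm hxv₃)]
    have hcFx : cF x = t := by
      rw [hcF, Function.update_of_ne hxv₁, hc₃x]
    have hcFy : cF y = u := by
      rw [hcF, Function.update_of_ne hyv₁, hc₃y]
    -- images on H-neighborhoods of x and y are unchanged by the last stages
    have hcFNx : cF '' H.neighborSet x = c₃ '' H.neighborSet x := by
      rw [hcF, hupd12 c₃ a v₁ (Or.inl rfl) x]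
    have hcFNy : cF '' H.neighborSet y = c₂ '' H.neighborSet y := by
      rw [hcF, hupd12 c₃ a v₁ (Or.inl rfl) y, hc₃, hupd12 c₂ b v₂ (Or.inr rfl) y]
    -- b, t facts
    have htne : t ≠ c₀ v₃ := by simpa using ht
    have hbne₁ : b ≠ c₀ v₃ := fun h => hb (h ▸ Set.mem_insert _ _)
    have hbne₂ : b ≠ t := fun h => hb (by
      rw [h, ← hc₂x]
      exact Set.mem_insert_of_mem _ (Set.mem_insert _ _))
    have hane₁ : a ≠ c₀ v₃ := fun h => ha (h ▸ Set.mem_insert _ _)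
    have hane₂ : a ≠ u := fun h => ha (by
      rw [h, ← hc₃y]
      exact Set.mem_insert_of_mem _ (Set.mem_insert _ _))
    have hune : u ≠ c₀ v₃ := by simpa using hu
    -- final verification
    refine ⟨cF, fun v => ?_⟩
    by_cases hv1 : v = v₁
    · subst hv1
      rw [hN₁]
      have himg : cF '' {v₂, v₃, x} = {b, c₀ v₃, t} := by
        rw [Set.image_insert_eq, Set.image_insert_eq, Set.image_singleton, hcFv₂, hcFv₃, hcFx]
      rw [himg, ncard_triple b (c₀ v₃) t hbne₁ hbne₂ (Ne.symm htne)]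
      exact min_le_left _ _
    by_cases hv2 : v = v₂
    · subst hv2
      rw [hN₂]
      have himg : cF '' {v₁, v₃, y} = {a, c₀ v₃, u} := by
        rw [Set.image_insert_eq, Set.image_insert_eq, Set.image_singleton, hcFv₁, hcFv₃, hcFy]
      rw [himg, ncard_triple a (c₀ v₃) u hane₁ hane₂ (Ne.symm hune)]
      exact min_le_left _ _
    by_cases hv3 : v = v₃
    · subst hv3
      have h1 : 3 ≤ (cF '' H.neighborSet v).ncard := by
        have h := hQF v
        rwa [min_eq_left hW3] at h
      have hsub2 : cF '' H.neighborSet v ⊆ cF '' G.neighborSet v :=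
        Set.image_mono (by
          rw [hHN v (Ne.symm hne₁₃) (Ne.symm hne₂₃)]
          exact Set.diff_subset)
      have h2 := Set.ncard_le_ncard hsub2 (Set.toFinite _)
      have h3 : min 3 (deg G v) ≤ 3 := min_le_left _ _
      omega
    by_cases hvx : v = x
    · subst hvx
      have hNGx : G.neighborSet v = insert v₁ (H.neighborSet v) := by
        rw [hHNx, Set.insert_diff_singleton, Set.insert_eq_self.mpr hv₁Nx]
      rw [hNGx, Set.image_insert_eq, hcFv₁]
      have hnm : a ∉ cF '' H.neighborSet v := by
        rw [hcFNx]
        exact fun h => ha (Set.mem_insert_of_mem _ (Set.mem_insert_of_mem _ h))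
      rw [Set.ncard_insert_of_notMem hnm (Set.toFinite _)]
      have h1 := hQF v
      have h2 : deg H v ≤ 2 := by rw [hdeg_def]; exact hdHx
      rw [min_eq_right (by omega : deg H v ≤ 3)] at h1
      have h3 : deg G v = deg H v + 1 := by
        rw [hdeg_def, hdeg_def, hHNx, Set.ncard_diff_singleton_of_mem hv₁Nx]
        have h4 : 1 ≤ (G.neighborSet v).ncard :=
          Set.ncard_pos (Set.toFinite _) |>.mpr ⟨v₁, hv₁Nx⟩
        omega
      have h5 : min 3 (deg G v) ≤ deg G v := min_le_right _ _
      omega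
    by_cases hvy : v = y
    · subst hvy
      have hNGx : G.neighborSet v = insert v₂ (H.neighborSet v) := by
        rw [hHNy, Set.insert_diff_singleton, Set.insert_eq_self.mpr hv₂Ny]
      rw [hNGx, Set.image_insert_eq, hcFv₂]
      have hnm : b ∉ cF '' H.neighborSet v := by
        rw [hcFNy]
        exact fun h => hb (Set.mem_insert_of_mem _ (Set.mem_insert_of_mem _ h))
      rw [Set.ncard_insert_of_notMem hnm (Set.toFinite _)]
      have h1 := hQF v
      have h2 : deg H v ≤ 2 := by rw [hdeg_def]; exact hdHy
      rw [min_eq_right (by omega : deg H v ≤ 3)] at h1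
      have h3 : deg G v = deg H v + 1 := by
        rw [hdeg_def, hdeg_def, hHNy, Set.ncard_diff_singleton_of_mem hv₂Ny]
        have h4 : 1 ≤ (G.neighborSet v).ncard :=
          Set.ncard_pos (Set.toFinite _) |>.mpr ⟨v₂, hv₂Ny⟩
        omega
      have h5 : min 3 (deg G v) ≤ deg G v := min_le_right _ _
      omega
    -- the generic vertex
    have hNv : H.neighborSet v = G.neighborSet v := by
      rw [hHN v hv1 hv2]
      ext z
      simp only [Set.mem_diff, Set.mem_insert_iff, Set.mem_singleton_iff, not_or]
      constructor
      · exact fun h => h.1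
      · intro hz
        refine ⟨hz, ?_, ?_⟩
        · intro hzv1
          have hmem : v ∈ G.neighborSet v₁ := by
            have hadj : G.Adj v v₁ := hzv1 ▸ (hz : G.Adj v z)
            simpa using hadj.symm
          rw [hN₁] at hmem
          rcases hmem with h | h | h
          exacts [hv2 h, hv3 h, hvx h]
        · intro hzv2
          have hmem : v ∈ G.neighborSet v₂ := by
            have hadj : G.Adj v v₂ := hzv2 ▸ (hz : G.Adj v z)
            simpa using hadj.symm
          rw [hN₂] at hmem
          rcases hmem with h | h | h
          exacts [hv1 h, hv3 h, hvy h]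
    have hdeq : deg H v = deg G v := by rw [hdeg_def, hdeg_def, hNv]
    have h := hQF v
    rw [hNv, hdeq] at h
    exact h
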